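/- Let γ, σ : [0,2π] → ℝ² be simple, closed, positively oriented, strictly convex C² curves parametrized by the angle θ of their outward normals, with equal Euclidean support function values and derivatives at θ = 0. If the Euclidean curvature of γ is at most that of σ at every θ, then the support function of γ is at least that of σ everywhere on [0,π] (with analogous statement on the reversed arc), and hence σ lies in the region bounded by γ. -/

import Mathlib

/-- Forward half-period comparison: if `u'' + u ≥ 0`, `u a = 0`, `u' a = 0`,
then `u ≥ 0` on `[a, a + π]`. -/
lemma half_nonneg (u u' u'' : ℝ → ℝ)
    (hu : ∀ θ, HasDerivAt u (u' θ) θ) (hu' : ∀ θ, HasDerivAt u' (u'' θ) θ)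
    (hu''c : Continuous u'') (a : ℝ)
    (h0 : u a = 0) (h1 : u' a = 0)
    (hf : ∀ θ, 0 ≤ u'' θ + u θ) :
    ∀ θ ∈ Set.Icc a (a + Real.pi), 0 ≤ u θ := by
  have huc : Continuous u := continuous_iff_continuousAt.2 fun θ => (hu θ).continuousAt
  set f : ℝ → ℝ := fun θ => u'' θ + u θ with hfdef
  have hfc : Continuous f := hu''c.add huc
  have hPc : Continuous (fun s => f s * Real.cos s) := hfc.mul Real.continuous_cos
  have hQc : Continuous (fun s => f s * Real.sin s) := hfc.mul Real.continuous_sin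
  set P : ℝ → ℝ := fun θ => ∫ s in a..θ, f s * Real.cos s with hPdef
  set Q : ℝ → ℝ := fun θ => ∫ s in a..θ, f s * Real.sin s with hQdef
  have hP : ∀ θ, HasDerivAt P (f θ * Real.cos θ) θ := fun θ =>
    intervalIntegral.integral_hasDerivAt_right (hPc.intervalIntegrable _ _)
      (hPc.stronglyMeasurableAtFilter _ _) hPc.continuousAt
  have hQ : ∀ θ, HasDerivAt Q (f θ * Real.sin θ) θ := fun θ =>
    intervalIntegral.integral_hasDerivAt_right (hQc.intervalIntegrable _ _)
      (hQc.stronglyMeasurableAtFilter _ _) hQc.continuousAt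
  set U : ℝ → ℝ := fun θ => Real.sin θ * P θ - Real.cos θ * Q θ with hUdef
  set V : ℝ → ℝ := fun θ => Real.cos θ * P θ + Real.sin θ * Q θ with hVdef
  have hU : ∀ θ, HasDerivAt U (V θ) θ := by
    intro θ
    have h := ((Real.hasDerivAt_sin θ).mul (hP θ)).sub ((Real.hasDerivAt_cos θ).mul (hQ θ))
    refine h.congr_deriv ?_
    simp only [hVdef]
    ring
  have hV : ∀ θ, HasDerivAt V (f θ - U θ) θ := by
    intro θ
    have h := ((Real.hasDerivAt_cos θ).mul (hP θ)).add ((Real.hasDerivAt_sin θ).mul (hQ θ))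
    refine h.congr_deriv ?_
    symm
    simp only [hUdef]
    linear_combination (-(f θ)) * Real.sin_sq_add_cos_sq θ
  set g : ℝ → ℝ := fun θ => u θ - U θ with hgdef
  set G : ℝ → ℝ := fun θ => u' θ - V θ with hGdef
  have hg : ∀ θ, HasDerivAt g (G θ) θ := fun θ => (hu θ).sub (hU θ)
  have hG : ∀ θ, HasDerivAt G (-(g θ)) θ := by
    intro θ
    have h := (hu' θ).sub (hV θ)
    refine h.congr_deriv ?_
    simp only [hgdef, hfdef]
    ring
  set E : ℝ → ℝ := fun θ => g θ ^ 2 + G θ ^ 2 with hEdef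
  have hE : ∀ θ, HasDerivAt E 0 θ := by
    intro θ
    have h := ((hg θ).pow 2).add ((hG θ).pow 2)
    refine h.congr_deriv ?_
    simp only [Nat.cast_ofNat]
    ring
  have hEconst : ∀ θ, E θ = E a := fun θ =>
    is_const_of_deriv_eq_zero (fun x => (hE x).differentiableAt) (fun x => (hE x).deriv) θ a
  have hPa : P a = 0 := by simp only [hPdef]; exact intervalIntegral.integral_same
  have hQa : Q a = 0 := by simp only [hQdef]; exact intervalIntegral.integral_same
  have hEa : E a = 0 := by
    simp only [hEdef, hgdef, hGdef, hUdef, hVdef, hPa, hQa, h0, h1]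
    ring
  have huU : ∀ θ, u θ = U θ := by
    intro θ
    have h := hEconst θ
    rw [hEa] at h
    simp only [hEdef] at h
    have h4 : g θ ^ 2 = 0 :=
      le_antisymm (by nlinarith [sq_nonneg (G θ)]) (sq_nonneg _)
    have h2 : g θ = 0 := by
      exact pow_eq_zero_iff (n := 2) (by norm_num) |>.mp h4
    have h3 : u θ - U θ = 0 := h2
    linarith
  intro θ hθ
  rw [huU θ]
  have haθ : a ≤ θ := hθ.1
  have hrepr : U θ
      = ∫ s in a..θ, (Real.sin θ * (f s * Real.cos s) - Real.cos θ * (f s * Real.sin s)) := by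
    rw [intervalIntegral.integral_sub ((hPc.intervalIntegrable _ _).const_mul (Real.sin θ))
      ((hQc.intervalIntegrable _ _).const_mul (Real.cos θ)),
      intervalIntegral.integral_const_mul, intervalIntegral.integral_const_mul]
  rw [hrepr]
  apply intervalIntegral.integral_nonneg haθ
  intro s hs
  have hsin : Real.sin θ * (f s * Real.cos s) - Real.cos θ * (f s * Real.sin s)
      = f s * Real.sin (θ - s) := by rw [Real.sin_sub]; ring
  rw [hsin]
  apply mul_nonneg (hf s)
  apply Real.sin_nonneg_of_nonneg_of_le_pi
  · linarith [hs.2]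
  · linarith [hs.1, hθ.2]

/-- Backward half-period version. -/
lemma half_nonneg' (u u' u'' : ℝ → ℝ)
    (hu : ∀ θ, HasDerivAt u (u' θ) θ) (hu' : ∀ θ, HasDerivAt u' (u'' θ) θ)
    (hu''c : Continuous u'') (a : ℝ)
    (h0 : u a = 0) (h1 : u' a = 0)
    (hf : ∀ θ, 0 ≤ u'' θ + u θ) :
    ∀ θ ∈ Set.Icc (a - Real.pi) a, 0 ≤ u θ := by
  set v : ℝ → ℝ := fun θ => u (2 * a - θ) with hvdef
  set v' : ℝ → ℝ := fun θ => -(u' (2 * a - θ)) with hv'def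
  set v'' : ℝ → ℝ := fun θ => u'' (2 * a - θ) with hv''def
  have hlin : ∀ θ : ℝ, HasDerivAt (fun x : ℝ => 2 * a - x) (-1) θ := by
    intro θ
    simpa using (hasDerivAt_id θ).const_sub (2 * a)
  have hv : ∀ θ, HasDerivAt v (v' θ) θ := by
    intro θ
    have h := (hu (2 * a - θ)).comp θ (hlin θ)
    exact h.congr_deriv (by simp [hv'def])
  have hv' : ∀ θ, HasDerivAt v' (v'' θ) θ := by
    intro θ
    have h := ((hu' (2 * a - θ)).comp θ (hlin θ)).neg
    exact h.congr_deriv (by simp [hv''def])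
  have hv''c : Continuous v'' := hu''c.comp (continuous_const.sub continuous_id)
  have key := half_nonneg v v' v'' hv hv' hv''c a
    (by simp only [hvdef]; rw [show 2 * a - a = a by ring]; exact h0)
    (by simp only [hv'def]; rw [show 2 * a - a = a by ring, h1]; ring)
    (fun θ => hf (2 * a - θ))
  intro θ hθ
  have h := key (2 * a - θ) ⟨by linarith [hθ.2], by linarith [hθ.1]⟩
  simpa only [hvdef, show 2 * a - (2 * a - θ) = θ by ring] using h
  
/-- Global version using `2π`-periodicity. -/
lemma per_nonneg (u u' u'' : ℝ → ℝ)
    (hu : ∀ θ, HasDerivAt u (u' θ) θ) (hu' : ∀ θ, HasDerivAt u' (u'' θ) θ)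
    (hu''c : Continuous u'') (hper : Function.Periodic u (2 * Real.pi)) (a : ℝ)
    (h0 : u a = 0) (h1 : u' a = 0)
    (hf : ∀ θ, 0 ≤ u'' θ + u θ) :
    ∀ θ, 0 ≤ u θ := by
  have h2π : (0 : ℝ) < 2 * Real.pi := by positivity
  intro θ
  set m := toIcoMod h2π (a - Real.pi) θ with hm
  have hmem : m ∈ Set.Ico (a - Real.pi) ((a - Real.pi) + 2 * Real.pi) :=
    toIcoMod_mem_Ico h2π _ θ
  have heq : u m = u θ := by
    rw [hm]
    exact hper.sub_zsmul_eq _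
  rw [← heq]
  rcases le_or_gt a m with h | h
  · exact half_nonneg u u' u'' hu hu' hu''c a h0 h1 hf m ⟨h, by linarith [hmem.2]⟩
  · exact half_nonneg' u u' u'' hu hu' hu''c a h0 h1 hf m ⟨hmem.1, h.le⟩

lemma c2_facts (u : ℝ → ℝ) (hu : ContDiff ℝ 2 u) :
    Differentiable ℝ u ∧ Differentiable ℝ (deriv u) ∧ Continuous (deriv (deriv u)) := by
  have h2 : ContDiff ℝ (1 + 1) u := by norm_num; exact hu
  rw [contDiff_succ_iff_deriv] at h2
  rw [contDiff_one_iff_deriv] at h2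
  exact ⟨h2.1, h2.2.2.1, h2.2.2.2⟩

/-- Comparison of convex curves via support functions. If two
closed strictly convex C² curves, described by their 2π-periodic support
functions h_γ, h_σ with h'' + h = 1/k_e > 0, share support value and derivative
at θ = 0, and the Euclidean curvature of γ is at most that of σ everywhere,
then h_σ ≤ h_γ on [0,π] (and, by the reversed-arc argument, everywhere), hence
every point of σ lies in the region bounded by γ (its coordinates satisfy all
supporting inequalities of γ). -/
theorem stmt_16 (hγ hσ kγ kσ : ℝ → ℝ)
    (hγC2 : ContDiff ℝ 2 hγ) (hσC2 : ContDiff ℝ 2 hσ)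
    (hγper : Function.Periodic hγ (2 * Real.pi))
    (hσper : Function.Periodic hσ (2 * Real.pi))
    (hkγpos : ∀ θ, 0 < kγ θ) (hkσpos : ∀ θ, 0 < kσ θ)
    (hodeγ : ∀ θ, deriv (deriv hγ) θ + hγ θ = 1 / kγ θ)
    (hodeσ : ∀ θ, deriv (deriv hσ) θ + hσ θ = 1 / kσ θ)
    (hinit1 : hγ 0 = hσ 0) (hinit2 : deriv hγ 0 = deriv hσ 0)
    (hcomp : ∀ θ, kγ θ ≤ kσ θ) :
    (∀ θ, hσ θ ≤ hγ θ) ∧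
      ∀ θ φ : ℝ,
        (hσ θ * Real.cos θ - deriv hσ θ * Real.sin θ) * Real.cos φ +
        (hσ θ * Real.sin θ + deriv hσ θ * Real.cos θ) * Real.sin φ ≤ hγ φ := by
  obtain ⟨hγ1, hγ2, hγ3⟩ := c2_facts hγ hγC2
  obtain ⟨hσ1, hσ2, hσ3⟩ := c2_facts hσ hσC2
  -- Part 1
  have part1 : ∀ θ, hσ θ ≤ hγ θ := by
    have key := per_nonneg (fun θ => hγ θ - hσ θ)
      (fun θ => deriv hγ θ - deriv hσ θ)
      (fun θ => deriv (deriv hγ) θ - deriv (deriv hσ) θ)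
      (fun θ => ((hγ1 θ).hasDerivAt).sub ((hσ1 θ).hasDerivAt))
      (fun θ => ((hγ2 θ).hasDerivAt).sub ((hσ2 θ).hasDerivAt))
      (hγ3.sub hσ3) (hγper.sub hσper) 0
      (by simp [hinit1]) (by simp [hinit2])
      (fun θ => by
        show 0 ≤ (deriv (deriv hγ) θ - deriv (deriv hσ) θ) + (hγ θ - hσ θ)
        have h1 := hodeγ θ
        have h2 := hodeσ θ
        have h3 : 1 / kσ θ ≤ 1 / kγ θ := one_div_le_one_div_of_le (hkγpos θ) (hcomp θ)
        linarith)
    intro θ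
    exact sub_nonneg.mp (key θ)
  refine ⟨part1, ?_⟩
  intro θ φ
  set x : ℝ := hσ θ * Real.cos θ - deriv hσ θ * Real.sin θ with hxdef
  set y : ℝ := hσ θ * Real.sin θ + deriv hσ θ * Real.cos θ with hydef
  have hd1 : ∀ φ : ℝ, HasDerivAt (fun φ => hσ φ - (x * Real.cos φ + y * Real.sin φ))
      (deriv hσ φ - (x * (-Real.sin φ) + y * Real.cos φ)) φ := fun φ =>
    ((hσ1 φ).hasDerivAt).sub
      (((Real.hasDerivAt_cos φ).const_mul x).add ((Real.hasDerivAt_sin φ).const_mul y))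
  have hd2 : ∀ φ : ℝ, HasDerivAt (fun φ => deriv hσ φ - (x * (-Real.sin φ) + y * Real.cos φ))
      (deriv (deriv hσ) φ - (x * (-Real.cos φ) + y * (-Real.sin φ))) φ := fun φ =>
    ((hσ2 φ).hasDerivAt).sub
      ((((Real.hasDerivAt_sin φ).neg).const_mul x).add ((Real.hasDerivAt_cos φ).const_mul y))
  have hc : Continuous (fun φ => deriv (deriv hσ) φ - (x * (-Real.cos φ) + y * (-Real.sin φ))) :=
    hσ3.sub ((continuous_const.mul Real.continuous_cos.neg).add
      (continuous_const.mul Real.continuous_sin.neg))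
  have hp : Function.Periodic (fun φ => hσ φ - (x * Real.cos φ + y * Real.sin φ))
      (2 * Real.pi) := by
    intro φ
    simp only
    rw [hσper φ, Real.cos_add_two_pi, Real.sin_add_two_pi]
  have hz1 : hσ θ - (x * Real.cos θ + y * Real.sin θ) = 0 := by
    simp only [hxdef, hydef]
    linear_combination (-(hσ θ)) * Real.sin_sq_add_cos_sq θ
  have hz2 : deriv hσ θ - (x * (-Real.sin θ) + y * Real.cos θ) = 0 := by
    simp only [hxdef, hydef]
    linear_combination (-(deriv hσ θ)) * Real.sin_sq_add_cos_sq θ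
  have hfn : ∀ φ : ℝ, 0 ≤ (deriv (deriv hσ) φ - (x * (-Real.cos φ) + y * (-Real.sin φ)))
      + (hσ φ - (x * Real.cos φ + y * Real.sin φ)) := by
    intro φ
    have h2 := hodeσ φ
    have h3 : 0 < 1 / kσ φ := one_div_pos.mpr (hkσpos φ)
    linarith
  have key2 : ∀ φ : ℝ, 0 ≤ hσ φ - (x * Real.cos φ + y * Real.sin φ) :=
    per_nonneg _ _ _ hd1 hd2 hc hp θ hz1 hz2 hfn
  have h := key2 φ
  have h2 := part1 φ
  linarith
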